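/- arXiv:math/0411100 — 3 statements merged into one kernel-verified Lean document; each statement's English description precedes it below -/
import Mathlib

section
/- Along any solution (u,v) of the geodesic equations u'' = 2u(u')²/(u²+v²), v'' = 2v(v')²/(u²+v²) with u²+v² ≠ 0, the quantity u'·v'/(u²+v²) is constant (its derivative vanishes identically). -/
/-- Along any solution of the Clifton-Pohl geodesic system with `u²+v² ≠ 0`,
the quantity `u'·v'/(u²+v²)` is constant: its derivative vanishes identically. -/
theorem cliftonPohl_first_integral_A
    (u v u' v' u'' v'' : ℝ → ℂ)
    (hu : ∀ t, HasDerivAt u (u' t) t) (hv : ∀ t, HasDerivAt v (v' t) t)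
    (hu' : ∀ t, HasDerivAt u' (u'' t) t) (hv' : ∀ t, HasDerivAt v' (v'' t) t)
    (hne : ∀ t, u t ^ 2 + v t ^ 2 ≠ 0)
    (geo_u : ∀ t, u'' t = 2 * u t * (u' t) ^ 2 / (u t ^ 2 + v t ^ 2))
    (geo_v : ∀ t, v'' t = 2 * v t * (v' t) ^ 2 / (u t ^ 2 + v t ^ 2)) :
    ∀ t, HasDerivAt (fun s => u' s * v' s / (u s ^ 2 + v s ^ 2)) 0 t := by
  intro t
  have hnum : HasDerivAt (fun s => u' s * v' s) (u'' t * v' t + u' t * v'' t) t :=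
    (hu' t).mul (hv' t)
  have hden : HasDerivAt (fun s => u s ^ 2 + v s ^ 2)
      (u' t * u t + u t * u' t + (v' t * v t + v t * v' t)) t := by
    exact (((hu t).mul (hu t)).add ((hv t).mul (hv t))).congr_of_eventuallyEq
      (Filter.Eventually.of_forall fun s => by simp only [pow_two, Pi.add_apply, Pi.mul_apply])
  have h := hnum.div hden (hne t)
  refine h.congr_deriv ?_
  rw [geo_u t, geo_v t]
  field_simp [hne t]
  ring
end

section
/- Along any solution (u,v) of the geodesic equations u'' = 2u(u')²/(u²+v²), v'' = 2v(v')²/(u²+v²) with u'·v' never zero, the quantity u/u' + v/v' is constant. -/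
/-- Along any solution of the Clifton-Pohl geodesic system with `u'·v'` never zero,
the quantity `u/u' + v/v'` is constant: its derivative vanishes identically. -/
theorem cliftonPohl_first_integral_B
    (u v u' v' u'' v'' : ℝ → ℂ)
    (hu : ∀ t, HasDerivAt u (u' t) t) (hv : ∀ t, HasDerivAt v (v' t) t)
    (hu' : ∀ t, HasDerivAt u' (u'' t) t) (hv' : ∀ t, HasDerivAt v' (v'' t) t)
    (hne : ∀ t, u t ^ 2 + v t ^ 2 ≠ 0)
    (hu'ne : ∀ t, u' t ≠ 0) (hv'ne : ∀ t, v' t ≠ 0)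
    (geo_u : ∀ t, u'' t = 2 * u t * (u' t) ^ 2 / (u t ^ 2 + v t ^ 2))
    (geo_v : ∀ t, v'' t = 2 * v t * (v' t) ^ 2 / (u t ^ 2 + v t ^ 2)) :
    ∀ t, HasDerivAt (fun s => u s / u' s + v s / v' s) 0 t := by
  intro t
  have h1 := ((hu t).div (hu' t) (hu'ne t)).add ((hv t).div (hv' t) (hv'ne t))
  refine h1.congr_deriv ?_
  rw [geo_u t, geo_v t]
  field_simp [hne t, hu'ne t, hv'ne t]
  ring
end

section
/- Let (u,v) be a solution of the geodesic system with u, v never zero, satisfying u·v' = v·u' identically and the first integrals u'v' = A(u²+v²), u/u' + v/v' = B. Then there exist constants a₁, a₂, b with u(t) = a₁e^{bt} and v(t) = a₂e^{bt}. -/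
lemma cp_const_of_deriv_zero (g : ℝ → ℂ) (h : ∀ t, HasDerivAt g 0 t) :
    ∀ t, g t = g 0 := fun t =>
  is_const_of_deriv_eq_zero (fun x => (h x).differentiableAt)
    (fun x => (h x).deriv) t 0

/-- A solution of the Clifton-Pohl geodesic system with `u`, `v` never zero that
satisfies `u·v' = v·u'` identically (and the first integrals `u'v' = A(u²+v²)`,
`u/u' + v/v' = B`) must be of the form `u(t) = a₁e^{bt}`, `v(t) = a₂e^{bt}`. -/
theorem cliftonPohl_proportional_geodesics
    (A B : ℂ) (u v u' v' u'' v'' : ℝ → ℂ)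
    (hu : ∀ t, HasDerivAt u (u' t) t) (hv : ∀ t, HasDerivAt v (v' t) t)
    (hu' : ∀ t, HasDerivAt u' (u'' t) t) (hv' : ∀ t, HasDerivAt v' (v'' t) t)
    (hune : ∀ t, u t ≠ 0) (hvne : ∀ t, v t ≠ 0)
    (geo_u : ∀ t, u'' t = 2 * u t * (u' t) ^ 2 / (u t ^ 2 + v t ^ 2))
    (geo_v : ∀ t, v'' t = 2 * v t * (v' t) ^ 2 / (u t ^ 2 + v t ^ 2))
    (hprop : ∀ t, u t * v' t = v t * u' t)
    (hA : ∀ t, u' t * v' t = A * (u t ^ 2 + v t ^ 2))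
    (hB : ∀ t, u t / u' t + v t / v' t = B) :
    ∃ a₁ a₂ b : ℂ, ∀ t : ℝ,
      u t = a₁ * Complex.exp (b * t) ∧ v t = a₂ * Complex.exp (b * t) := by
  set c : ℂ := u 0 / v 0 with hc
  have hc0 : c ≠ 0 := div_ne_zero (hune 0) (hvne 0)
  -- u = c * v
  have hdiv : ∀ t, HasDerivAt (fun t => u t / v t) 0 t := by
    intro t
    have h := (hu t).div (hv t) (hvne t)
    have e : (u' t * v t - u t * v' t) / v t ^ 2 = 0 := by
      rw [hprop t]; ring_nf
    rwa [e] at h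
  have huv : ∀ t, u t = c * v t := by
    intro t
    have h := cp_const_of_deriv_zero _ hdiv t
    rw [hc, ← h]
    exact (div_mul_cancel₀ _ (hvne t)).symm
  -- u' = c * v'
  have hu'v' : ∀ t, u' t = c * v' t := by
    intro t
    have h := hprop t
    rw [huv t] at h
    exact mul_left_cancel₀ (hvne t) (by rw [← h]; ring : v t * u' t = v t * (c * v' t))
  have key : ∀ t, c * (v' t) ^ 2 = A * (1 + c ^ 2) * (v t) ^ 2 := by
    intro t
    have h := hA t
    rw [huv t, hu'v' t] at h
    linear_combination h
  by_cases hcase : A * (1 + c ^ 2) = 0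
  · -- v' = 0, constants
    have hv'0 : ∀ t, v' t = 0 := by
      intro t
      have h := key t
      rw [hcase, zero_mul] at h
      have : v' t ^ 2 = 0 := by
        rcases mul_eq_zero.mp h with h' | h'
        · exact absurd h' hc0
        · exact h'
      exact pow_eq_zero_iff (n := 2) (by norm_num) |>.mp this
    have hvconst : ∀ t, v t = v 0 := by
      apply cp_const_of_deriv_zero
      intro t; have := hv t; rwa [hv'0 t] at this
    refine ⟨u 0, v 0, 0, fun t => ?_⟩
    simp only [zero_mul, Complex.exp_zero, mul_one]
    refine ⟨?_, hvconst t⟩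
    rw [huv t, hvconst t, ← huv 0]
  · -- v' never zero; use hB
    have hv'ne : ∀ t, v' t ≠ 0 := by
      intro t h0
      have h : A * (1 + c ^ 2) * v t ^ 2 = 0 := by
        rw [← key t, h0]; ring
      rcases mul_eq_zero.mp h with h' | h'
      · exact hcase h'
      · exact hvne t (pow_eq_zero_iff two_ne_zero |>.mp h')
    have hBeq : ∀ t, 2 * (v t / v' t) = B := by
      intro t
      have h := hB t
      rw [huv t, hu'v' t] at h
      rw [mul_div_mul_left _ _ hc0] at h
      linear_combination h
    have hB0 : B ≠ 0 := by
      intro h0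
      have h := hBeq 0
      rw [h0] at h
      have h2 : v 0 / v' 0 = 0 := by
        have := mul_eq_zero.mp h
        simpa using this
      rw [div_eq_zero_iff, or_iff_left (hv'ne 0)] at h2
      exact hvne 0 h2
    set b : ℂ := 2 / B with hb
    have hode : ∀ t, v' t = b * v t := by
      intro t
      have h := hBeq t
      field_simp [hv'ne t] at h
      rw [hb, div_mul_eq_mul_div, eq_div_iff hB0]
      linear_combination -h
    -- v t * exp(-(b t)) constant
    have hexp : ∀ t : ℝ, HasDerivAt (fun s : ℝ => Complex.exp (-(b * s))) (-b * Complex.exp (-(b * t))) t := by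
      intro t
      have h1 : HasDerivAt (fun s : ℝ => -(b * (s : ℂ))) (-b) t := by
        have := (Complex.ofRealCLM.hasDerivAt (x := t)).const_mul b
        exact (by simpa using this.neg : HasDerivAt (-fun y : ℝ => b * (y : ℂ)) (-b) t)
      simpa [mul_comm] using h1.cexp
    have hg : ∀ t, HasDerivAt (fun s => v s * Complex.exp (-(b * s))) 0 t := by
      intro t
      have h := (hv t).mul (hexp t)
      have e : v' t * Complex.exp (-(b * t)) + v t * (-b * Complex.exp (-(b * t))) = 0 := by
        rw [hode t]; ring
      rwa [e] at h
    have hvconst := cp_const_of_deriv_zero _ hg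
    have hvt : ∀ t : ℝ, v t = v 0 * Complex.exp (b * t) := by
      intro t
      have h := hvconst t
      simp only [Complex.ofReal_zero, mul_zero, neg_zero, Complex.exp_zero, mul_one] at h
      have hne := Complex.exp_ne_zero (-(b * t))
      field_simp [Complex.exp_neg] at h ⊢
      have e1 : Complex.exp (-(b * t)) * Complex.exp (b * t) = 1 := by rw [← Complex.exp_add]; simp
      linear_combination Complex.exp (b * t) * h - v t * e1
    refine ⟨u 0, v 0, b, fun t => ⟨?_, hvt t⟩⟩
    rw [huv t, hvt t, ← mul_assoc, ← huv 0]
end
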